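/- The product of the first r primes, p₁p₂⋯p_r (with p₁ = 2), is a practical number for every natural number r ≥ 1; moreover p₁p₂⋯p_{i−1}·p_i^k·p_{i+1}⋯p_r is practical for any i ≤ r and k ≥ 1. -/

import Mathlib

def Practical (n : ℕ) : Prop :=
  0 < n ∧ ∀ m : ℕ, 0 < m → m ≤ n → ∃ S : Finset ℕ, (∀ d ∈ S, d ∣ n) ∧ ∑ d ∈ S, d = m

lemma practical_one : Practical 1 := by
  refine ⟨one_pos, fun m hm hm1 => ?_⟩
  interval_cases m
  exact ⟨{1}, by simp⟩

lemma exists_rep {n : ℕ} (hn : Practical n) {m : ℕ} (hm : m ≤ n) :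
    ∃ S : Finset ℕ, (∀ d ∈ S, d ∣ n) ∧ (∀ d ∈ S, d ≤ m) ∧ ∑ d ∈ S, d = m := by
  rcases Nat.eq_zero_or_pos m with rfl | hm0
  · exact ⟨∅, by simp, by simp, by simp⟩
  · obtain ⟨S, hS, hsum⟩ := hn.2 m hm0 hm
    refine ⟨S, hS, fun d hd => ?_, hsum⟩
    calc d ≤ ∑ x ∈ S, x := Finset.single_le_sum (fun i _ => Nat.zero_le i) hd
    _ = m := hsum

lemma practical_mul {n p : ℕ} (hn : Practical n) (hp : 0 < p) (hpn : p ≤ n + 1) :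
    Practical (n * p) := by
  refine ⟨Nat.mul_pos hn.1 hp, fun m hm hmn => ?_⟩
  have hr : m % p ≤ n := by
    have := Nat.mod_lt m hp
    omega
  have hq : m / p ≤ n := by
    calc m / p ≤ n * p / p := Nat.div_le_div_right hmn
    _ = n := Nat.mul_div_cancel n hp
  obtain ⟨S, hSd, hSle, hSsum⟩ := exists_rep hn hr
  obtain ⟨T, hTd, _, hTsum⟩ := exists_rep hn hq
  refine ⟨S ∪ T.image (fun d => p * d), ?_, ?_⟩
  · intro d hd
    rcases Finset.mem_union.1 hd with h | h
    · exact (hSd d h).mul_right p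
    · obtain ⟨e, he, rfl⟩ := Finset.mem_image.1 h
      rw [mul_comm n p]
      exact mul_dvd_mul_left p (hTd e he)
  · have hdisj : Disjoint S (T.image (fun d => p * d)) := by
      rw [Finset.disjoint_left]
      intro a haS haT
      obtain ⟨e, he, rfl⟩ := Finset.mem_image.1 haT
      have h1 : 0 < e := Nat.pos_of_dvd_of_pos (hTd e he) hn.1
      have h2 : p * e ≤ m % p := hSle _ haS
      have h3 : m % p < p := Nat.mod_lt m hp
      nlinarith
    rw [Finset.sum_union hdisj, Finset.sum_image
      (fun a _ b _ h => Nat.eq_of_mul_eq_mul_left hp h), ← Finset.mul_sum,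
      hSsum, hTsum, Nat.mod_add_div]

lemma practical_mul_pow {n p : ℕ} (hn : Practical n) (hp : 0 < p) (hpn : p ≤ n + 1) :
    ∀ k : ℕ, Practical (n * p ^ k) := by
  intro k
  induction k with
  | zero => simpa using hn
  | succ k ih =>
      rw [pow_succ, ← mul_assoc]
      refine practical_mul ih hp ?_
      have : n ≤ n * p ^ k := Nat.le_mul_of_pos_right n (Nat.pow_pos hp)
      omega

lemma nth_prime_le_prod (e : ℕ → ℕ) (he : ∀ j, 1 ≤ e j) {r : ℕ} (hr : 1 ≤ r) :
    Nat.nth Nat.Prime r ≤ (∏ j ∈ Finset.range r, Nat.nth Nat.Prime j ^ e j) + 1 := by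
  have hpos : 0 < ∏ j ∈ Finset.range r, Nat.nth Nat.Prime j ^ e j :=
    Finset.prod_pos fun j _ => Nat.pow_pos (Nat.prime_nth_prime j).pos
  rcases eq_or_lt_of_le hr with h1 | h2
  · -- r = 1
    subst h1
    rw [Nat.nth_prime_one_eq_three]
    have : 2 ^ e 0 ≤ ∏ j ∈ Finset.range 1, Nat.nth Nat.Prime j ^ e j := by
      simp [Nat.nth_prime_zero_eq_two]
    have h2 : 2 ≤ 2 ^ e 0 := by
      calc 2 = 2 ^ 1 := rfl
      _ ≤ 2 ^ e 0 := Nat.pow_le_pow_right (by norm_num) (he 0)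
    omega
  · -- r ≥ 2
    have hq := Nat.prime_nth_prime (r - 1)
    obtain ⟨p, hp, hlt, hle⟩ := Nat.exists_prime_lt_and_le_two_mul
      (Nat.nth Nat.Prime (r - 1)) hq.pos.ne'
    have hnth : Nat.nth Nat.Prime r ≤ p := by
      have hcount := Nat.nth_count (p := Nat.Prime) hp
      have : r - 1 < Nat.count Nat.Prime p := by
        by_contra h
        push_neg at h
        have := Nat.nth_le_nth (p := Nat.Prime) Nat.infinite_setOf_prime |>.2 h
        rw [hcount] at this
        omega
      calc Nat.nth Nat.Prime r ≤ Nat.nth Nat.Prime (Nat.count Nat.Prime p) :=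
        (Nat.nth_le_nth Nat.infinite_setOf_prime).2 (by omega)
      _ = p := hcount
    have h2dvd : 2 ∣ ∏ j ∈ Finset.range r, Nat.nth Nat.Prime j ^ e j := by
      refine dvd_trans ?_ (Finset.dvd_prod_of_mem _ (Finset.mem_range.2 (by omega : 0 < r)))
      rw [Nat.nth_prime_zero_eq_two]
      exact dvd_pow_self 2 (by have := he 0; omega : e 0 ≠ 0)
    have hqdvd : Nat.nth Nat.Prime (r - 1) ∣ ∏ j ∈ Finset.range r, Nat.nth Nat.Prime j ^ e j := by
      refine dvd_trans ?_ (Finset.dvd_prod_of_mem _ (Finset.mem_range.2 (by omega : r - 1 < r)))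
      exact dvd_pow_self _ (by have := he (r - 1); omega)
    have hne : Nat.nth Nat.Prime 0 ≠ Nat.nth Nat.Prime (r - 1) := by
      intro h
      have := (Nat.nth_lt_nth (p := Nat.Prime) Nat.infinite_setOf_prime).2
        (by omega : 0 < r - 1)
      omega
    rw [Nat.nth_prime_zero_eq_two] at hne
    have hcop : Nat.Coprime 2 (Nat.nth Nat.Prime (r - 1)) :=
      (Nat.coprime_primes Nat.prime_two hq).2 hne
    have hdvd : 2 * Nat.nth Nat.Prime (r - 1) ∣ ∏ j ∈ Finset.range r, Nat.nth Nat.Prime j ^ e j := hcop.mul_dvd_of_dvd_of_dvd h2dvd hqdvd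
    have : 2 * Nat.nth Nat.Prime (r - 1) ≤ ∏ j ∈ Finset.range r, Nat.nth Nat.Prime j ^ e j :=
      Nat.le_of_dvd hpos hdvd
    omega

lemma prod_pow_practical (e : ℕ → ℕ) (he : ∀ j, 1 ≤ e j) :
    ∀ r : ℕ, 1 ≤ r → Practical (∏ j ∈ Finset.range r, Nat.nth Nat.Prime j ^ e j) := by
  intro r
  induction r with
  | zero => omega
  | succ r ih =>
      intro _
      rcases Nat.eq_zero_or_pos r with rfl | hr
      · rw [Finset.prod_range_one, Nat.nth_prime_zero_eq_two,
          show (2 : ℕ) ^ e 0 = 1 * 2 ^ e 0 by ring]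
        exact practical_mul_pow practical_one two_pos (by norm_num) (e 0)
      · rw [Finset.prod_range_succ]
        exact practical_mul_pow (ih hr) (Nat.prime_nth_prime r).pos
          (nth_prime_le_prod e he hr) (e r)

theorem stmt_16 (r : ℕ) (hr : 1 ≤ r) :
    Practical (∏ j ∈ Finset.range r, Nat.nth Nat.Prime j) ∧
      ∀ i < r, ∀ k : ℕ, 1 ≤ k →
        Practical (∏ j ∈ Finset.range r,
          if j = i then Nat.nth Nat.Prime j ^ k else Nat.nth Nat.Prime j) := by
  constructor
  · have := prod_pow_practical (fun _ => 1) (fun _ => le_refl 1) r hr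
    simpa using this
  · intro i _ k hk
    have := prod_pow_practical (fun j => if j = i then k else 1)
      (fun j => by split <;> omega) r hr
    have heq : (∏ j ∈ Finset.range r,
        if j = i then Nat.nth Nat.Prime j ^ k else Nat.nth Nat.Prime j)
        = ∏ j ∈ Finset.range r, Nat.nth Nat.Prime j ^ (if j = i then k else 1) :=
      Finset.prod_congr rfl fun j _ => by split <;> simp
    rw [heq]
    exact this
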